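/- Let F_q be a finite field, n > k ≥ 1 integers, and H ∈ F_q^{(n−k)×n} a matrix of full row rank n−k with ker H ≠ 0 (e.g., the parity-check matrix of a cyclic code of dimension k). Define the open-boundary La-cross parity-check matrices H_X = [I_n ⊗ H | Hᵀ ⊗ I_{n−k}] and H_Z = [H ⊗ I_n | −I_{n−k} ⊗ Hᵀ], acting on N = n² + (n−k)² coordinates. Then the resulting CSS code has N physical qudits, exactly k² logical qudits, i.e., N − rank(H_X) − rank(H_Z) = k², and its distance equals d = min{wt(v) : v ∈ ker H, v ≠ 0}, the minimum distance of the classical code with parity-check matrix H. -/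

import Mathlib

open Matrix Kronecker

lemma dual_mem_rowspace {F : Type*} [Field F] {m n : Type*} [Fintype m] [Fintype n]
    [DecidableEq n] (A : Matrix m n F) (x : n → F)
    (h : ∀ y : n → F, A.mulVec y = 0 → x ⬝ᵥ y = 0) :
    ∃ μ : m → F, x = A.vecMul μ := by
  classical
  set L := A.mulVecLin with hL
  let φ : (n → F) →ₗ[F] F :=
    { toFun := fun y => x ⬝ᵥ y
      map_add' := fun y z => dotProduct_add x y z
      map_smul' := fun c y => by simp }
  have hker : LinearMap.ker L ≤ LinearMap.ker φ := by
    intro y hy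
    simp only [LinearMap.mem_ker] at hy ⊢
    exact h y (by simpa [hL] using hy)
  let ψ : LinearMap.range L →ₗ[F] F :=
    ((LinearMap.ker L).liftQ φ hker).comp (L.quotKerEquivRange.symm : LinearMap.range L →ₗ[F] _)
  obtain ⟨g, hg⟩ := LinearMap.exists_extend ψ
  have hfac : ∀ y, g (L y) = φ y := by
    intro y
    have h2 : g (L y) = ψ ⟨L y, LinearMap.mem_range_self L y⟩ := by
      have := congrArg (fun f => f ⟨L y, LinearMap.mem_range_self L y⟩) hg
      simpa using this
    rw [h2]
    show ((LinearMap.ker L).liftQ φ hker) (L.quotKerEquivRange.symm ⟨L y, _⟩) = φ y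
    rw [L.quotKerEquivRange_symm_apply_image y]
    simp
  refine ⟨fun i => g (Pi.single i 1), funext fun j => ?_⟩
  have h3 : x j = φ (Pi.single j 1) := by simp [φ]
  rw [h3, ← hfac]
  have h4 : L (Pi.single j 1) = fun i => A i j := by
    simp [hL, Matrix.mulVecLin_apply, Matrix.mulVec_single]
    rfl
  rw [h4]
  rw [LinearMap.pi_apply_eq_sum_univ g (fun i => A i j)]
  simp only [Matrix.vecMul, dotProduct, mul_comm, Pi.single_apply]
  refine Finset.sum_congr rfl fun i _ => ?_
  congr 1
  congr 1
  ext j'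
  simp [Pi.single_apply, eq_comm]

lemma ham_aux {ι₁ ι₂ F : Type*} [Fintype ι₁] [Fintype ι₂] [DecidableEq F] [Zero F]
    (u : ι₁ → F) (v : ι₂ → F) (f : ι₁ → ι₂)
    (h1 : ∀ i, u i ≠ 0 → v (f i) ≠ 0)
    (h2 : ∀ i j, u i ≠ 0 → u j ≠ 0 → f i = f j → i = j) :
    hammingNorm u ≤ hammingNorm v := by
  classical
  simp only [hammingNorm]
  apply Finset.card_le_card_of_injOn f
  · intro i hi
    simp only [Finset.coe_filter, Finset.mem_coe, Finset.mem_filter, Finset.mem_univ, true_and,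
      Set.mem_setOf_eq] at hi ⊢
    exact h1 i hi
  · intro i hi j hj hij
    simp only [Finset.coe_filter, Finset.mem_univ, true_and, Set.mem_setOf_eq] at hi hj
    exact h2 i j hi hj hij

lemma mem_span_rows_iff {F : Type*} [CommRing F] {m n : Type*} [Fintype m] (M : Matrix m n F)
    (v : n → F) : v ∈ Submodule.span F (Set.range M) ↔ ∃ x : m → F, x ᵥ* M = v := by
  change v ∈ Submodule.span F (Set.range M.row) ↔ _
  rw [← range_vecMulLinear]
  exact ⟨fun ⟨x, hx⟩ => ⟨x, hx⟩, fun ⟨x, hx⟩ => ⟨x, hx⟩⟩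

lemma rank_of_right_inv {F : Type*} [Field F] {m n : Type*} [Fintype m] [Fintype n]
    [DecidableEq m] (M : Matrix m n F) (C : Matrix n m F) (h : M * C = 1) :
    M.rank = Fintype.card m := by
  refine le_antisymm (Matrix.rank_le_card_height M) ?_
  calc Fintype.card m = (1 : Matrix m m F).rank := (Matrix.rank_one).symm
    _ = (M * C).rank := by rw [h]
    _ ≤ M.rank := Matrix.rank_mul_le_left _ _

section comp
variable {F : Type*} [CommRing F] {ι κ : Type*} [Fintype ι] [Fintype κ] [DecidableEq ι] [DecidableEq κ]
variable (A : Matrix ι κ F)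

lemma lacrossX_mulVec (v : (κ × κ) ⊕ (ι × ι) → F) (i : κ) (a : ι) :
    (fromCols ((1 : Matrix κ κ F) ⊗ₖ A) (Aᵀ ⊗ₖ (1 : Matrix ι ι F))).mulVec v (i, a)
      = (∑ m, A a m * v (Sum.inl (i, m))) + ∑ b, A b i * v (Sum.inr (b, a)) := by
  simp [Matrix.mulVec, dotProduct, Fintype.sum_sum_type, Fintype.sum_prod_type,
    Matrix.one_apply, ite_mul, mul_ite, mul_zero, zero_mul, Finset.sum_ite_eq, Finset.sum_ite_eq']

lemma lacrossZ_mulVec (v : (κ × κ) ⊕ (ι × ι) → F) (b : ι) (j : κ) :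
    (fromCols (A ⊗ₖ (1 : Matrix κ κ F)) (-((1 : Matrix ι ι F) ⊗ₖ Aᵀ))).mulVec v (b, j)
      = (∑ l, A b l * v (Sum.inl (l, j))) - ∑ d, A d j * v (Sum.inr (b, d)) := by
  simp [Matrix.mulVec, dotProduct, Fintype.sum_sum_type, Fintype.sum_prod_type,
    Matrix.one_apply, ite_mul, mul_ite, mul_zero, zero_mul, Finset.sum_ite_eq, Finset.sum_ite_eq',
    sub_eq_add_neg, Finset.sum_neg_distrib]

lemma lacrossX_vecMul_inl (lam : κ × ι → F) (l m : κ) :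
    (lam ᵥ* (fromCols ((1 : Matrix κ κ F) ⊗ₖ A) (Aᵀ ⊗ₖ (1 : Matrix ι ι F)))) (Sum.inl (l, m))
      = ∑ a, lam (l, a) * A a m := by
  simp [Matrix.vecMul, dotProduct, Fintype.sum_prod_type,
    Matrix.one_apply, ite_mul, mul_ite, mul_zero, zero_mul, Finset.sum_ite_eq, Finset.sum_ite_eq']

lemma lacrossX_vecMul_inr (lam : κ × ι → F) (b c : ι) :
    (lam ᵥ* (fromCols ((1 : Matrix κ κ F) ⊗ₖ A) (Aᵀ ⊗ₖ (1 : Matrix ι ι F)))) (Sum.inr (b, c))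
      = ∑ i, lam (i, c) * A b i := by
  simp [Matrix.vecMul, dotProduct, Fintype.sum_prod_type,
    Matrix.one_apply, ite_mul, mul_ite, mul_zero, zero_mul, Finset.sum_ite_eq, Finset.sum_ite_eq']

lemma lacrossZ_vecMul_inl (mu : ι × κ → F) (l m : κ) :
    (mu ᵥ* (fromCols (A ⊗ₖ (1 : Matrix κ κ F)) (-((1 : Matrix ι ι F) ⊗ₖ Aᵀ)))) (Sum.inl (l, m))
      = ∑ b, mu (b, m) * A b l := by
  simp [Matrix.vecMul, dotProduct, Fintype.sum_prod_type,
    Matrix.one_apply, ite_mul, mul_ite, mul_zero, zero_mul, Finset.sum_ite_eq, Finset.sum_ite_eq']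

lemma lacrossZ_vecMul_inr (mu : ι × κ → F) (c d : ι) :
    (mu ᵥ* (fromCols (A ⊗ₖ (1 : Matrix κ κ F)) (-((1 : Matrix ι ι F) ⊗ₖ Aᵀ)))) (Sum.inr (c, d))
      = -∑ j, mu (c, j) * A d j := by
  simp [Matrix.vecMul, dotProduct, Fintype.sum_prod_type,
    Matrix.one_apply, ite_mul, mul_ite, mul_zero, zero_mul, Finset.sum_ite_eq, Finset.sum_ite_eq',
    Finset.sum_neg_distrib]

end comp

theorem lacross_open_boundary
    {F : Type*} [Field F] [Fintype F] [DecidableEq F] (n k : ℕ)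
    (hk : 1 ≤ k) (hkn : k < n)
    (H : Matrix (Fin (n - k)) (Fin n) F)
    (hrank : H.rank = n - k)
    (hker : ∃ v : Fin n → F, v ≠ 0 ∧ H.mulVec v = 0)
    (HX : Matrix (Fin n × Fin (n - k)) ((Fin n × Fin n) ⊕ (Fin (n - k) × Fin (n - k))) F)
    (HZ : Matrix (Fin (n - k) × Fin n) ((Fin n × Fin n) ⊕ (Fin (n - k) × Fin (n - k))) F)
    (hHX : HX = fromCols ((1 : Matrix (Fin n) (Fin n) F) ⊗ₖ H)
        (Hᵀ ⊗ₖ (1 : Matrix (Fin (n - k)) (Fin (n - k)) F)))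
    (hHZ : HZ = fromCols (H ⊗ₖ (1 : Matrix (Fin n) (Fin n) F))
        (-((1 : Matrix (Fin (n - k)) (Fin (n - k)) F) ⊗ₖ Hᵀ))) :
    ((n ^ 2 + (n - k) ^ 2 : ℕ) : ℤ) - HX.rank - HZ.rank = (k : ℤ) ^ 2 ∧
    (∃ v : ((Fin n × Fin n) ⊕ (Fin (n - k) × Fin (n - k))) → F,
      HZ.mulVec v = 0 ∧ v ∉ Submodule.span F (Set.range HX)) ∧
    (∃ v : ((Fin n × Fin n) ⊕ (Fin (n - k) × Fin (n - k))) → F,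
      HX.mulVec v = 0 ∧ v ∉ Submodule.span F (Set.range HZ)) ∧
    min
      (sInf {w : ℕ | ∃ v : ((Fin n × Fin n) ⊕ (Fin (n - k) × Fin (n - k))) → F,
        HZ.mulVec v = 0 ∧ v ∉ Submodule.span F (Set.range HX) ∧ hammingNorm v = w})
      (sInf {w : ℕ | ∃ v : ((Fin n × Fin n) ⊕ (Fin (n - k) × Fin (n - k))) → F,
        HX.mulVec v = 0 ∧ v ∉ Submodule.span F (Set.range HZ) ∧ hammingNorm v = w})
    = sInf {w : ℕ | ∃ v : Fin n → F, H.mulVec v = 0 ∧ v ≠ 0 ∧ hammingNorm v = w} := by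
  classical
  have hn0 : 0 < n := lt_of_le_of_lt (Nat.zero_le k) hkn
  -- a right inverse of H
  obtain ⟨B, hB⟩ : ∃ B : Matrix (Fin n) (Fin (n - k)) F, H * B = 1 := by
    have hrange : LinearMap.range H.mulVecLin = ⊤ := by
      apply Submodule.eq_top_of_finrank_eq
      have h1 : H.rank = Module.finrank F (LinearMap.range H.mulVecLin) := rfl
      rw [← h1, hrank]
      simp
    have hsurj : Function.Surjective H.mulVec := by
      intro y
      have hy : y ∈ LinearMap.range H.mulVecLin := hrange ▸ Submodule.mem_top
      obtain ⟨x, hx⟩ := hy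
      exact ⟨x, hx⟩
    choose g hg using hsurj
    refine ⟨Matrix.of fun i j => g (Pi.single j 1) i, ?_⟩
    ext a j
    have h2 := congrFun (hg (Pi.single j 1)) a
    simp only [Matrix.mulVec, dotProduct] at h2
    simp only [Matrix.mul_apply, Matrix.of_apply, Matrix.one_apply]
    rw [h2, Pi.single_apply, eq_comm]
  -- vecMul-injectivity of H
  have hinj : ∀ x : Fin (n - k) → F, x ᵥ* H = 0 → x = 0 := by
    intro x hx
    have h1 := Matrix.vecMul_vecMul x H B
    rw [hx, hB, Matrix.zero_vecMul, Matrix.vecMul_one] at h1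
    exact h1.symm
  -- ranks
  have hXright : HX * fromRows ((1 : Matrix (Fin n) (Fin n) F) ⊗ₖ B)
      (0 : Matrix (Fin (n - k) × Fin (n - k)) (Fin n × Fin (n - k)) F) = 1 := by
    rw [hHX, fromCols_mul_fromRows, Matrix.mul_zero, add_zero, ← Matrix.mul_kronecker_mul,
      hB, Matrix.one_mul, Matrix.one_kronecker_one]
  have hZright : HZ * fromRows (B ⊗ₖ (1 : Matrix (Fin n) (Fin n) F))
      (0 : Matrix (Fin (n - k) × Fin (n - k)) (Fin (n - k) × Fin n) F) = 1 := by
    rw [hHZ, fromCols_mul_fromRows, Matrix.mul_zero, add_zero, ← Matrix.mul_kronecker_mul,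
      hB, Matrix.one_mul, Matrix.one_kronecker_one]
  have hrankHX : HX.rank = n * (n - k) := by
    have := rank_of_right_inv HX _ hXright
    simpa using this
  have hrankHZ : HZ.rank = (n - k) * n := by
    have := rank_of_right_inv HZ _ hZright
    simpa using this
  have harith : ((n ^ 2 + (n - k) ^ 2 : ℕ) : ℤ) - HX.rank - HZ.rank = (k : ℤ) ^ 2 := by
    rw [hrankHX, hrankHZ]
    push_cast [Nat.cast_sub hkn.le]
    ring
  -- pointwise formulas
  have hXapp : ∀ (v : ((Fin n × Fin n) ⊕ (Fin (n - k) × Fin (n - k))) → F) (i : Fin n)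
      (a : Fin (n - k)), HX.mulVec v (i, a)
        = (∑ m, H a m * v (Sum.inl (i, m))) + ∑ b, H b i * v (Sum.inr (b, a)) :=
    fun v i a => by rw [hHX]; exact lacrossX_mulVec H v i a
  have hZapp : ∀ (v : ((Fin n × Fin n) ⊕ (Fin (n - k) × Fin (n - k))) → F) (b : Fin (n - k))
      (j : Fin n), HZ.mulVec v (b, j)
        = (∑ l, H b l * v (Sum.inl (l, j))) - ∑ d, H d j * v (Sum.inr (b, d)) :=
    fun v b j => by rw [hHZ]; exact lacrossZ_mulVec H v b j
  have hvmX_inl : ∀ (lam : Fin n × Fin (n - k) → F) (l m : Fin n),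
      (lam ᵥ* HX) (Sum.inl (l, m)) = ∑ a, lam (l, a) * H a m :=
    fun lam l m => by rw [hHX]; exact lacrossX_vecMul_inl H lam l m
  have hvmX_inr : ∀ (lam : Fin n × Fin (n - k) → F) (b c : Fin (n - k)),
      (lam ᵥ* HX) (Sum.inr (b, c)) = ∑ i, lam (i, c) * H b i :=
    fun lam b c => by rw [hHX]; exact lacrossX_vecMul_inr H lam b c
  have hvmZ_inl : ∀ (mu : Fin (n - k) × Fin n → F) (l m : Fin n),
      (mu ᵥ* HZ) (Sum.inl (l, m)) = ∑ b, mu (b, m) * H b l :=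
    fun mu l m => by rw [hHZ]; exact lacrossZ_vecMul_inl H mu l m
  have hvmZ_inr : ∀ (mu : Fin (n - k) × Fin n → F) (c d : Fin (n - k)),
      (mu ᵥ* HZ) (Sum.inr (c, d)) = -∑ j, mu (c, j) * H d j :=
    fun mu c d => by rw [hHZ]; exact lacrossZ_vecMul_inr H mu c d
  -- key structural lemma, Z side
  have hZkey : ∀ v : ((Fin n × Fin n) ⊕ (Fin (n - k) × Fin (n - k))) → F,
      HZ.mulVec v = 0 → v ∉ Submodule.span F (Set.range HX) →
      ∃ c' : Fin n → F, H.mulVec c' = 0 ∧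
        (fun i : Fin n => ∑ m', v (Sum.inl (i, m')) * c' m') ≠ 0 := by
    intro v hv hns
    by_contra hcon
    push_neg at hcon
    apply hns
    have hrow : ∀ i : Fin n, ∃ μ : Fin (n - k) → F,
        (fun m => v (Sum.inl (i, m))) = H.vecMul μ := by
      intro i
      apply dual_mem_rowspace
      intro y hy
      have := congrFun (hcon y hy) i
      simpa [dotProduct] using this
    choose μ hμ using hrow
    have hμ' : ∀ (i : Fin n) (m : Fin n), v (Sum.inl (i, m)) = ∑ a, μ i a * H a m := by
      intro i m
      have := congrFun (hμ i) m
      simpa [Matrix.vecMul, dotProduct] using this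
    rw [mem_span_rows_iff]
    refine ⟨fun p => μ p.1 p.2, funext fun x => ?_⟩
    cases x with
    | inl p =>
      obtain ⟨l, m⟩ := p
      rw [hvmX_inl]
      exact (hμ' l m).symm
    | inr q =>
      obtain ⟨b, d⟩ := q
      rw [hvmX_inr]
      have hz : (fun d' => (∑ i, μ i d' * H b i) - v (Sum.inr (b, d'))) ᵥ* H = 0 := by
        funext j'
        have hk := congrFun hv (b, j')
        rw [hZapp] at hk
        simp only [Pi.zero_apply] at hk
        have hk2 := sub_eq_zero.mp hk
        show ∑ d', ((∑ i, μ i d' * H b i) - v (Sum.inr (b, d'))) * H d' j' = 0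
        have e1 : ∑ d', (∑ i, μ i d' * H b i) * H d' j'
            = ∑ l, H b l * v (Sum.inl (l, j')) := by
          calc ∑ d', (∑ i, μ i d' * H b i) * H d' j'
              = ∑ d', ∑ i, μ i d' * H b i * H d' j' := by simp_rw [Finset.sum_mul]
            _ = ∑ i, ∑ d', μ i d' * H b i * H d' j' := Finset.sum_comm
            _ = ∑ i, H b i * ∑ d', μ i d' * H d' j' := by
                refine Finset.sum_congr rfl fun i _ => ?_
                rw [Finset.mul_sum]
                exact Finset.sum_congr rfl fun d' _ => by ring
            _ = ∑ l, H b l * v (Sum.inl (l, j')) := by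
                refine Finset.sum_congr rfl fun i _ => ?_
                rw [hμ' i j']
        have e2 : ∑ d', v (Sum.inr (b, d')) * H d' j'
            = ∑ l, H b l * v (Sum.inl (l, j')) := by
          calc ∑ d', v (Sum.inr (b, d')) * H d' j'
              = ∑ d', H d' j' * v (Sum.inr (b, d')) :=
                Finset.sum_congr rfl fun d' _ => mul_comm _ _
            _ = ∑ l, H b l * v (Sum.inl (l, j')) := hk2.symm
        calc ∑ d', ((∑ i, μ i d' * H b i) - v (Sum.inr (b, d'))) * H d' j'
            = (∑ d', (∑ i, μ i d' * H b i) * H d' j')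
              - ∑ d', v (Sum.inr (b, d')) * H d' j' := by
              simp_rw [sub_mul, Finset.sum_sub_distrib]
          _ = 0 := by rw [e1, e2, sub_self]
      have := congrFun (hinj _ hz) d
      simp only [Pi.zero_apply, sub_eq_zero] at this
      exact this
  -- key structural lemma, X side
  have hXkey : ∀ v : ((Fin n × Fin n) ⊕ (Fin (n - k) × Fin (n - k))) → F,
      HX.mulVec v = 0 → v ∉ Submodule.span F (Set.range HZ) →
      ∃ c' : Fin n → F, H.mulVec c' = 0 ∧
        (fun m : Fin n => ∑ i, v (Sum.inl (i, m)) * c' i) ≠ 0 := by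
    intro v hv hns
    by_contra hcon
    push_neg at hcon
    apply hns
    have hcol : ∀ m : Fin n, ∃ ν : Fin (n - k) → F,
        (fun i => v (Sum.inl (i, m))) = H.vecMul ν := by
      intro m
      apply dual_mem_rowspace
      intro y hy
      have := congrFun (hcon y hy) m
      simpa [dotProduct] using this
    choose ν hν using hcol
    have hν' : ∀ (i m : Fin n), v (Sum.inl (i, m)) = ∑ b, ν m b * H b i := by
      intro i m
      have := congrFun (hν m) i
      simpa [Matrix.vecMul, dotProduct] using this
    rw [mem_span_rows_iff]
    refine ⟨fun q => ν q.2 q.1, funext fun x => ?_⟩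
    cases x with
    | inl p =>
      obtain ⟨l, m⟩ := p
      rw [hvmZ_inl]
      exact (hν' l m).symm
    | inr q =>
      obtain ⟨cc, d⟩ := q
      rw [hvmZ_inr]
      have hz : (fun b => v (Sum.inr (b, d)) + ∑ m, ν m b * H d m) ᵥ* H = 0 := by
        funext i'
        have hk := congrFun hv (i', d)
        rw [hXapp] at hk
        simp only [Pi.zero_apply] at hk
        show ∑ b, (v (Sum.inr (b, d)) + ∑ m, ν m b * H d m) * H b i' = 0
        have e1 : ∑ b, (∑ m, ν m b * H d m) * H b i'
            = ∑ m, H d m * v (Sum.inl (i', m)) := by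
          calc ∑ b, (∑ m, ν m b * H d m) * H b i'
              = ∑ b, ∑ m, ν m b * H d m * H b i' := by simp_rw [Finset.sum_mul]
            _ = ∑ m, ∑ b, ν m b * H d m * H b i' := Finset.sum_comm
            _ = ∑ m, H d m * ∑ b, ν m b * H b i' := by
                refine Finset.sum_congr rfl fun m _ => ?_
                rw [Finset.mul_sum]
                exact Finset.sum_congr rfl fun b _ => by ring
            _ = ∑ m, H d m * v (Sum.inl (i', m)) := by
                refine Finset.sum_congr rfl fun m _ => ?_
                rw [hν' i' m]
        have e2 : ∑ b, v (Sum.inr (b, d)) * H b i' = ∑ b, H b i' * v (Sum.inr (b, d)) :=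
          Finset.sum_congr rfl fun b _ => mul_comm _ _
        calc ∑ b, (v (Sum.inr (b, d)) + ∑ m, ν m b * H d m) * H b i'
            = (∑ b, v (Sum.inr (b, d)) * H b i') + ∑ b, (∑ m, ν m b * H d m) * H b i' := by
              simp_rw [add_mul, Finset.sum_add_distrib]
          _ = 0 := by rw [e1, e2, add_comm, hk]
      have := congrFun (hinj _ hz) cc
      simp only [Pi.zero_apply] at this
      have h8 := eq_neg_of_add_eq_zero_left this
      rw [h8]
  -- minimal classical codeword
  have hSne : {w : ℕ | ∃ v : Fin n → F, H.mulVec v = 0 ∧ v ≠ 0 ∧ hammingNorm v = w}.Nonempty := by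
    obtain ⟨v, hv1, hv2⟩ := hker
    exact ⟨hammingNorm v, v, hv2, hv1, rfl⟩
  obtain ⟨c, hcker, hcne, hcham⟩ := Nat.sInf_mem hSne
  have hcsum : ∀ a, ∑ m, H a m * c m = 0 := fun a => by
    simpa [Matrix.mulVec, dotProduct] using congrFun hcker a
  obtain ⟨j, hj⟩ : ∃ j, c j ≠ 0 := by
    by_contra hcj
    push_neg at hcj
    exact hcne (funext hcj)
  -- lower bound, Z side
  have hZlow : ∀ w ∈ {w : ℕ | ∃ v : ((Fin n × Fin n) ⊕ (Fin (n - k) × Fin (n - k))) → F,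
      HZ.mulVec v = 0 ∧ v ∉ Submodule.span F (Set.range HX) ∧ hammingNorm v = w},
      sInf {w : ℕ | ∃ v : Fin n → F, H.mulVec v = 0 ∧ v ≠ 0 ∧ hammingNorm v = w} ≤ w := by
    rintro w ⟨v, hv1, hv2, rfl⟩
    obtain ⟨c', hc'ker, hc'ne⟩ := hZkey v hv1 hv2
    set u : Fin n → F := fun i => ∑ m', v (Sum.inl (i, m')) * c' m' with hu
    have hc'sum : ∀ dd, ∑ m, H dd m * c' m = 0 := fun dd => by
      simpa [Matrix.mulVec, dotProduct] using congrFun hc'ker dd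
    have huker : H.mulVec u = 0 := by
      funext b
      show ∑ i, H b i * u i = 0
      calc ∑ i, H b i * u i
          = ∑ i, ∑ m', H b i * (v (Sum.inl (i, m')) * c' m') := by
            refine Finset.sum_congr rfl fun i _ => ?_
            rw [hu]
            exact Finset.mul_sum _ _ _
        _ = ∑ m', ∑ i, H b i * (v (Sum.inl (i, m')) * c' m') := Finset.sum_comm
        _ = ∑ m', (∑ i, H b i * v (Sum.inl (i, m'))) * c' m' := by
            refine Finset.sum_congr rfl fun m' _ => ?_
            rw [Finset.sum_mul]
            exact Finset.sum_congr rfl fun i _ => by ring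
        _ = ∑ m', (∑ dd, H dd m' * v (Sum.inr (b, dd))) * c' m' := by
            refine Finset.sum_congr rfl fun m' _ => ?_
            congr 1
            have hk := congrFun hv1 (b, m')
            rw [hZapp] at hk
            simp only [Pi.zero_apply] at hk
            exact sub_eq_zero.mp hk
        _ = ∑ dd, v (Sum.inr (b, dd)) * ∑ m', H dd m' * c' m' := by
            simp_rw [Finset.sum_mul, Finset.mul_sum]
            rw [Finset.sum_comm]
            exact Finset.sum_congr rfl fun dd _ => Finset.sum_congr rfl fun m' _ => by ring
        _ = 0 := by simp [hc'sum]
    have h1 : sInf {w : ℕ | ∃ v : Fin n → F, H.mulVec v = 0 ∧ v ≠ 0 ∧ hammingNorm v = w}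
        ≤ hammingNorm u := Nat.sInf_le ⟨u, huker, hc'ne, rfl⟩
    refine h1.trans ?_
    have hsel : ∀ i : Fin n, u i ≠ 0 → ∃ m', v (Sum.inl (i, m')) ≠ 0 := by
      intro i hui
      by_contra hno
      push_neg at hno
      refine hui ?_
      rw [hu]
      simp [hno]
    refine ham_aux u v (fun i => Sum.inl (i,
      if h : ∃ m', v (Sum.inl (i, m')) ≠ 0 then h.choose else ⟨0, hn0⟩)) ?_ ?_
    · intro i hui
      have h := hsel i hui
      simp only [dif_pos h]
      exact h.choose_spec
    · intro i i' _ _ hfe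
      have h9 := Sum.inl_injective hfe
      exact (Prod.ext_iff.mp h9).1
  -- lower bound, X side
  have hXlow : ∀ w ∈ {w : ℕ | ∃ v : ((Fin n × Fin n) ⊕ (Fin (n - k) × Fin (n - k))) → F,
      HX.mulVec v = 0 ∧ v ∉ Submodule.span F (Set.range HZ) ∧ hammingNorm v = w},
      sInf {w : ℕ | ∃ v : Fin n → F, H.mulVec v = 0 ∧ v ≠ 0 ∧ hammingNorm v = w} ≤ w := by
    rintro w ⟨v, hv1, hv2, rfl⟩
    obtain ⟨c', hc'ker, hc'ne⟩ := hXkey v hv1 hv2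
    set u : Fin n → F := fun m => ∑ i, v (Sum.inl (i, m)) * c' i with hu
    have hc'sum : ∀ b, ∑ i, H b i * c' i = 0 := fun b => by
      simpa [Matrix.mulVec, dotProduct] using congrFun hc'ker b
    have huker : H.mulVec u = 0 := by
      funext a
      show ∑ m, H a m * u m = 0
      calc ∑ m, H a m * u m
          = ∑ m, ∑ i, H a m * (v (Sum.inl (i, m)) * c' i) := by
            refine Finset.sum_congr rfl fun m _ => ?_
            rw [hu]
            exact Finset.mul_sum _ _ _
        _ = ∑ i, ∑ m, H a m * (v (Sum.inl (i, m)) * c' i) := Finset.sum_comm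
        _ = ∑ i, (∑ m, H a m * v (Sum.inl (i, m))) * c' i := by
            refine Finset.sum_congr rfl fun i _ => ?_
            rw [Finset.sum_mul]
            exact Finset.sum_congr rfl fun m _ => by ring
        _ = ∑ i, (-∑ b, H b i * v (Sum.inr (b, a))) * c' i := by
            refine Finset.sum_congr rfl fun i _ => ?_
            congr 1
            have hk := congrFun hv1 (i, a)
            rw [hXapp] at hk
            simp only [Pi.zero_apply] at hk
            exact eq_neg_of_add_eq_zero_left hk
        _ = -∑ i, ∑ b, H b i * v (Sum.inr (b, a)) * c' i := by
            rw [← Finset.sum_neg_distrib]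
            refine Finset.sum_congr rfl fun i _ => ?_
            rw [neg_mul, Finset.sum_mul]
        _ = -∑ b, v (Sum.inr (b, a)) * ∑ i, H b i * c' i := by
            congr 1
            rw [Finset.sum_comm]
            simp_rw [Finset.mul_sum]
            exact Finset.sum_congr rfl fun b _ => Finset.sum_congr rfl fun i _ => by ring
        _ = 0 := by simp [hc'sum]
    have h1 : sInf {w : ℕ | ∃ v : Fin n → F, H.mulVec v = 0 ∧ v ≠ 0 ∧ hammingNorm v = w}
        ≤ hammingNorm u := Nat.sInf_le ⟨u, huker, hc'ne, rfl⟩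
    refine h1.trans ?_
    have hsel : ∀ m : Fin n, u m ≠ 0 → ∃ i, v (Sum.inl (i, m)) ≠ 0 := by
      intro m hum
      by_contra hno
      push_neg at hno
      refine hum ?_
      rw [hu]
      simp [hno]
    refine ham_aux u v (fun m => Sum.inl (
      (if h : ∃ i, v (Sum.inl (i, m)) ≠ 0 then h.choose else ⟨0, hn0⟩), m)) ?_ ?_
    · intro m hum
      have h := hsel m hum
      simp only [dif_pos h]
      exact h.choose_spec
    · intro m m' _ _ hfe
      have h9 := Sum.inl_injective hfe
      exact (Prod.ext_iff.mp h9).2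
  -- candidate Z-logical operator
  set vZc : ((Fin n × Fin n) ⊕ (Fin (n - k) × Fin (n - k))) → F :=
    Sum.elim (fun p => if p.2 = j then c p.1 else 0) 0 with hvZc
  have hvZker : HZ.mulVec vZc = 0 := by
    funext x
    obtain ⟨b, j'⟩ := x
    rw [Pi.zero_apply, hZapp]
    simp only [hvZc, Sum.elim_inl, Sum.elim_inr, Pi.zero_apply, mul_zero,
      Finset.sum_const_zero, sub_zero]
    by_cases hjj : j' = j
    · simp [hjj, hcsum b]
    · simp [hjj]
  have hvZnot : vZc ∉ Submodule.span F (Set.range HX) := by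
    intro hmem
    rw [mem_span_rows_iff] at hmem
    obtain ⟨lam, hlam⟩ := hmem
    have e1 : ∑ m, vZc (Sum.inl (j, m)) * c m = c j * c j := by
      simp [hvZc, ite_mul, zero_mul, Finset.sum_ite_eq']
    have e2 : ∑ m, vZc (Sum.inl (j, m)) * c m = 0 := by
      have hv1 : ∀ m, vZc (Sum.inl (j, m)) = ∑ a, lam (j, a) * H a m := fun m => by
        rw [← hlam, hvmX_inl]
      calc ∑ m, vZc (Sum.inl (j, m)) * c m
          = ∑ m, ∑ a, lam (j, a) * H a m * c m := by simp_rw [hv1, Finset.sum_mul]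
        _ = ∑ a, ∑ m, lam (j, a) * H a m * c m := Finset.sum_comm
        _ = ∑ a, lam (j, a) * ∑ m, H a m * c m := by
            refine Finset.sum_congr rfl fun a _ => ?_
            rw [Finset.mul_sum]
            exact Finset.sum_congr rfl fun m _ => by ring
        _ = 0 := by simp [hcsum]
    rw [e1] at e2
    exact hj (mul_self_eq_zero.mp e2)
  have hvZham : hammingNorm vZc ≤ hammingNorm c := by
    refine ham_aux vZc c (Sum.elim Prod.fst fun _ => j) ?_ ?_
    · intro x hx
      match x with
      | Sum.inl p =>
        simp only [hvZc, Sum.elim_inl] at hx ⊢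
        by_cases hp : p.2 = j
        · simpa [hp] using hx
        · simp [hp] at hx
      | Sum.inr q => simp [hvZc] at hx
    · intro x y hx hy hfe
      match x, y with
      | Sum.inl p, Sum.inl p' =>
        simp only [hvZc, Sum.elim_inl] at hx hy hfe
        by_cases hp : p.2 = j
        · by_cases hp' : p'.2 = j
          · exact congrArg Sum.inl (Prod.ext hfe (hp.trans hp'.symm))
          · simp [hp'] at hy
        · simp [hp] at hx
      | Sum.inl p, Sum.inr q => simp [hvZc] at hy
      | Sum.inr q, Sum.inl p => simp [hvZc] at hx
      | Sum.inr q, Sum.inr q' => simp [hvZc] at hx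
  -- candidate X-logical operator
  set vXc : ((Fin n × Fin n) ⊕ (Fin (n - k) × Fin (n - k))) → F :=
    Sum.elim (fun p => if p.1 = j then c p.2 else 0) 0 with hvXc
  have hvXker : HX.mulVec vXc = 0 := by
    funext x
    obtain ⟨i, a⟩ := x
    rw [Pi.zero_apply, hXapp]
    simp only [hvXc, Sum.elim_inl, Sum.elim_inr, Pi.zero_apply, mul_zero,
      Finset.sum_const_zero, add_zero]
    by_cases hij : i = j
    · simp [hij, hcsum a]
    · simp [hij]
  have hvXnot : vXc ∉ Submodule.span F (Set.range HZ) := by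
    intro hmem
    rw [mem_span_rows_iff] at hmem
    obtain ⟨mu, hmu⟩ := hmem
    have e1 : ∑ l, vXc (Sum.inl (l, j)) * c l = c j * c j := by
      simp [hvXc, ite_mul, zero_mul, Finset.sum_ite_eq']
    have e2 : ∑ l, vXc (Sum.inl (l, j)) * c l = 0 := by
      have hv1 : ∀ l, vXc (Sum.inl (l, j)) = ∑ b, mu (b, j) * H b l := fun l => by
        rw [← hmu, hvmZ_inl]
      calc ∑ l, vXc (Sum.inl (l, j)) * c l
          = ∑ l, ∑ b, mu (b, j) * H b l * c l := by simp_rw [hv1, Finset.sum_mul]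
        _ = ∑ b, ∑ l, mu (b, j) * H b l * c l := Finset.sum_comm
        _ = ∑ b, mu (b, j) * ∑ l, H b l * c l := by
            refine Finset.sum_congr rfl fun b _ => ?_
            rw [Finset.mul_sum]
            exact Finset.sum_congr rfl fun l _ => by ring
        _ = 0 := by simp [hcsum]
    rw [e1] at e2
    exact hj (mul_self_eq_zero.mp e2)
  have hvXham : hammingNorm vXc ≤ hammingNorm c := by
    refine ham_aux vXc c (Sum.elim Prod.snd fun _ => j) ?_ ?_
    · intro x hx
      match x with
      | Sum.inl p =>
        simp only [hvXc, Sum.elim_inl] at hx ⊢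
        by_cases hp : p.1 = j
        · simpa [hp] using hx
        · simp [hp] at hx
      | Sum.inr q => simp [hvXc] at hx
    · intro x y hx hy hfe
      match x, y with
      | Sum.inl p, Sum.inl p' =>
        simp only [hvXc, Sum.elim_inl] at hx hy hfe
        by_cases hp : p.1 = j
        · by_cases hp' : p'.1 = j
          · exact congrArg Sum.inl (Prod.ext (hp.trans hp'.symm) hfe)
          · simp [hp'] at hy
        · simp [hp] at hx
      | Sum.inl p, Sum.inr q => simp [hvXc] at hy
      | Sum.inr q, Sum.inl p => simp [hvXc] at hx
      | Sum.inr q, Sum.inr q' => simp [hvXc] at hx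
  -- assemble
  refine ⟨harith, ⟨vZc, hvZker, hvZnot⟩, ⟨vXc, hvXker, hvXnot⟩, ?_⟩
  have hZinf : sInf {w : ℕ | ∃ v : ((Fin n × Fin n) ⊕ (Fin (n - k) × Fin (n - k))) → F,
      HZ.mulVec v = 0 ∧ v ∉ Submodule.span F (Set.range HX) ∧ hammingNorm v = w}
      = sInf {w : ℕ | ∃ v : Fin n → F, H.mulVec v = 0 ∧ v ≠ 0 ∧ hammingNorm v = w} := by
    refine le_antisymm ?_ (le_csInf ⟨_, vZc, hvZker, hvZnot, rfl⟩ hZlow)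
    refine le_trans (Nat.sInf_le ⟨vZc, hvZker, hvZnot, rfl⟩) ?_
    rw [← hcham]
    exact hvZham
  have hXinf : sInf {w : ℕ | ∃ v : ((Fin n × Fin n) ⊕ (Fin (n - k) × Fin (n - k))) → F,
      HX.mulVec v = 0 ∧ v ∉ Submodule.span F (Set.range HZ) ∧ hammingNorm v = w}
      = sInf {w : ℕ | ∃ v : Fin n → F, H.mulVec v = 0 ∧ v ≠ 0 ∧ hammingNorm v = w} := by
    refine le_antisymm ?_ (le_csInf ⟨_, vXc, hvXker, hvXnot, rfl⟩ hXlow)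
    refine le_trans (Nat.sInf_le ⟨vXc, hvXker, hvXnot, rfl⟩) ?_
    rw [← hcham]
    exact hvXham
  rw [hZinf, hXinf, min_self]
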